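/- If ⟨A_{δ,i} : δ ∈ S, i < δ⟩ enumerates a ♣⁻(S)-sequence (i.e., for each δ ∈ S, 𝒜_δ = {A_{δ,i} : i < δ}, and for every cofinal Z ⊆ κ there are δ ∈ S, i < δ with sup(A_{δ,i} ∩ Z) = δ), then for every stationary T ⊆ κ there exists a single index i < κ such that for every club E ⊆ κ there is δ ∈ S with sup(A_{δ,i} ∩ E ∩ T) = δ. -/

import Mathlib

open Set Ordinal

noncomputable section

abbrev O : Type 1 := Ordinal.{0}

/-- `ssup A` is the strict supremum of a set of ordinals. -/
def ssup (A : Set O) : O := sSup ((· + 1) '' A)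

/-- `acc⁺(A)`: accumulation points below the strict sup. -/
def accP (A : Set O) : Set O := {α | α < ssup A ∧ 0 < α ∧ sSup (A ∩ Iio α) = α}

def accOf (A : Set O) : Set O := A ∩ accP A

def nacc (A : Set O) : Set O := A \ accOf A

def clOf (A : Set O) : Set O := A ∪ accP A

/-- order type of a set of ordinals -/
def otp (A : Set O) : Ordinal.{1} := Ordinal.type (Subrel ((· < ·) : O → O → Prop) (· ∈ A))

/-- lift a small ordinal one universe up -/
def olift (a : O) : Ordinal.{1} := Ordinal.lift.{1} a

/-- `suc_σ(A)`: elements of `A` whose index in `A` is `j+1` for some `j < σ`. -/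
def sucSet (σ : Ordinal.{1}) (A : Set O) : Set O := {β | β ∈ A ∧ ∃ j < σ, otp (A ∩ Iio β) = j + 1}

def UnbIn (A : Set O) (δ : O) : Prop := ∀ α < δ, ∃ β ∈ A, α < β ∧ β < δ

def IsClubIn (C : Set O) (δ : O) : Prop :=
  C ⊆ Iio δ ∧ UnbIn C δ ∧ ∀ α < δ, 0 < α → sSup (C ∩ Iio α) = α → α ∈ C

def IsStatIn (S : Set O) (δ : O) : Prop :=
  S ⊆ Iio δ ∧ ∀ D, IsClubIn D δ → (S ∩ D).Nonempty

def Ecof (κ : O) (lam : Cardinal.{0}) : Set O := {δ | δ < κ ∧ δ.cof = lam}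

def PhiSup (B x : Set O) : Set O :=
  if sSup (x ∩ B) = sSup x then clOf (x ∩ B) else x \ Iio (sSup (x ∩ B))

def PhiD (D x : Set O) : Set O :=
  if sSup (D ∩ Iio (sSup x)) = sSup x then
    {γ | ∃ η ∈ x, sInf D < η ∧ γ = sSup (D ∩ Iio η)}
  else x \ Iio (sSup (D ∩ Iio (sSup x)))

/-- `cf(δ)`-additive proper ideal on `δ` extending the bounded ideal. -/
def GoodIdeal (δ : O) (J : Set (Set O)) : Prop :=
  (∀ A B : Set O, A ⊆ B → B ∈ J → A ∈ J) ∧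
  (Iio δ ∉ J) ∧
  (∀ B : Set O, B ⊆ Iio δ → sSup B < δ → B ∈ J) ∧
  (∀ ξ < (Ordinal.cof δ).ord, ∀ f : O → Set O, (∀ i < ξ, f i ∈ J) → (⋃ i ∈ Iio ξ, f i) ∈ J)


section Helpers

lemma sup_eq_of_unbddIn {B : Set O} {δ : O} (hB : B ⊆ Iio δ) (h0 : 0 < δ)
    (h : ∀ ξ < δ, ∃ β ∈ B, ξ < β) : sSup B = δ := by
  have hbdd : BddAbove B := ⟨δ, fun b hb => (hB hb).le⟩
  have hne : B.Nonempty := by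
    obtain ⟨β, hβ, -⟩ := h 0 h0; exact ⟨β, hβ⟩
  refine le_antisymm (csSup_le hne fun b hb => (hB hb).le) ?_
  by_contra hlt
  push_neg at hlt
  obtain ⟨β, hβ, hβ2⟩ := h (sSup B) hlt
  exact hβ2.not_ge (le_csSup hbdd hβ)

lemma unbddIn_of_sup_eq {B : Set O} {δ : O} (h0 : 0 < δ) (h : sSup B = δ) :
    ∀ ξ < δ, ∃ β ∈ B, ξ < β := by
  intro ξ hξ
  have hne : B.Nonempty := by
    rcases B.eq_empty_or_nonempty with rfl | hne
    · rw [csSup_empty] at h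
      exact absurd h.symm h0.ne'
    · exact hne
  exact exists_lt_of_lt_csSup hne (h ▸ hξ)

end Helpers

/-- a single index works for a `♣⁻(S)`-sequence, relative to a stationary `T`. -/
theorem statement10 (κ : Cardinal.{0}) (hκ : κ.IsRegular) (hκ1 : Cardinal.aleph0 < κ)
    (S : Set O) (hS : IsStatIn S κ.ord)
    (A : O → O → Set O)
    (hsub : ∀ δ ∈ S, ∀ i < δ, A δ i ⊆ Iio δ)
    (hsize : ∀ δ ∈ S, ∀ i < δ, Cardinal.mk ↥(A δ i) < Cardinal.lift.{1} δ.card)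
    (hguess : ∀ Z : Set O, Z ⊆ Iio κ.ord → UnbIn Z κ.ord →
      ∃ δ ∈ S, ∃ i < δ, sSup (A δ i ∩ Z) = δ)
    (T : Set O) (hT : IsStatIn T κ.ord) :
    ∃ i < κ.ord, ∀ E, IsClubIn E κ.ord →
      ∃ δ ∈ S, i < δ ∧ sSup (A δ i ∩ E ∩ T) = δ := by
  by_contra hcon
  push_neg at hcon
  have hlim : Order.IsSuccLimit (κ.ord) := Cardinal.isSuccLimit_ord hκ.aleph0_le
  have hIio : IsClubIn (Iio κ.ord) κ.ord := by
    refine ⟨subset_rfl, fun α hα => ⟨α + 1, ?_, ?_, ?_⟩, fun α hα _ _ => hα⟩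
    · simpa using hlim.succ_lt hα
    · exact lt_add_one α
    · simpa using hlim.succ_lt hα
  have hfail : ∀ i : O, ∃ E, IsClubIn E κ.ord ∧
      ∀ δ ∈ S, i < δ → sSup (A δ i ∩ E ∩ T) ≠ δ := by
    intro i
    by_cases hi : i < κ.ord
    · exact hcon i hi
    · refine ⟨Iio κ.ord, hIio, fun δ hδ hiδ _ => hi (hiδ.trans (hS.1 hδ))⟩
  choose F hFc hFb using hfail
  -- choice of elements of F i above any ξ
  have hgex : ∀ i ξ : O, ∃ β : O, ξ < κ.ord → β ∈ F i ∧ ξ < β ∧ β < κ.ord := by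
    intro i ξ
    by_cases hξ : ξ < κ.ord
    · obtain ⟨β, hβ1, hβ2, hβ3⟩ := (hFc i).2.1 ξ hξ
      exact ⟨β, fun _ => ⟨hβ1, hβ2, hβ3⟩⟩
    · exact ⟨0, fun h => absurd h hξ⟩
  choose g hg using hgex
  -- the step function
  set step : O → O := fun ξ =>
    max (ξ + 1) (⨆ p : ξ.ToType, g ((Ordinal.ToType.mk (o := ξ)).symm p) ξ) with hstep
  have hstep_self : ∀ ξ : O, ξ < step ξ := fun ξ =>
    (lt_add_one ξ).trans_le (le_max_left _ _)
  have hstep_ge : ∀ ξ : O, ∀ i < ξ, g i ξ ≤ step ξ := by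
    intro ξ i hi
    have : g i ξ = g ((Ordinal.ToType.mk (o := ξ)).symm ((Ordinal.ToType.mk (o := ξ)) ⟨i, hi⟩)) ξ := by
      rw [OrderIso.symm_apply_apply]
    rw [this]
    exact le_max_of_le_right (Ordinal.le_iSup _ _)
  have hstep_lt : ∀ ξ < κ.ord, step ξ < κ.ord := by
    intro ξ hξ
    apply max_lt
    · simpa using hlim.succ_lt hξ
    · apply Cardinal.iSup_lt_ord_of_isRegular hκ
      · rw [Cardinal.mk_toType]
        exact Cardinal.lt_ord.mp hξ
      · intro p
        exact (hg _ ξ hξ).2.2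
  -- the diagonal intersection
  set E : Set O := {β | β < κ.ord ∧ ∀ i < β, β ∈ F i} with hE
  have hEsub : E ⊆ Iio κ.ord := fun β hβ => hβ.1
  -- E is unbounded
  have hEunb : UnbIn E κ.ord := by
    intro α hα
    set b : ℕ → O := fun n => step^[n] (α + 1) with hb
    have hb0 : b 0 = α + 1 := rfl
    have hbsucc : ∀ n, b (n + 1) = step (b n) := by
      intro n; simp [hb, Function.iterate_succ_apply']
    have hblt : ∀ n, b n < κ.ord := by
      intro n
      induction n with
      | zero => rw [hb0]; simpa using hlim.succ_lt hα
      | succ n ih => rw [hbsucc]; exact hstep_lt _ ih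
    have hbmono : ∀ n, b n < b (n + 1) := by
      intro n; rw [hbsucc]; exact hstep_self _
    have hbmono' : ∀ m n : ℕ, m ≤ n → b m ≤ b n := by
      intro m n hmn
      induction n with
      | zero => simp_all
      | succ n ih =>
        rcases Nat.lt_or_ge m (n + 1) with h | h
        · exact (ih (Nat.lt_succ_iff.mp h)).trans (hbmono n).le
        · have : m = n + 1 := le_antisymm hmn h
          rw [this]
    set β : O := ⨆ n, b n with hβdef
    have hβlt : β < κ.ord := by
      apply Cardinal.iSup_lt_ord_of_isRegular hκ _ hblt
      simpa using hκ1
    have hble : ∀ n, b n ≤ β := fun n => Ordinal.le_iSup b n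
    have hblt' : ∀ n, b n < β := fun n => (hbmono n).trans_le (hble (n + 1))
    have hαβ : α < β := lt_of_lt_of_le (lt_add_one α) (hb0 ▸ hble 0)
    have hβpos : 0 < β := (zero_le (a := α)).trans_lt hαβ
    refine ⟨β, ⟨hβlt, ?_⟩, hαβ, hβlt⟩
    intro i hi
    obtain ⟨n, hn⟩ := (Ordinal.lt_iSup_iff).mp hi
    apply (hFc i).2.2 β hβlt hβpos
    apply sup_eq_of_unbddIn inter_subset_right hβpos
    intro ξ hξ
    obtain ⟨m, hm⟩ := (Ordinal.lt_iSup_iff).mp hξ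
    set k := max m n with hk
    have hik : i < b k := hn.trans_le (hbmono' n k (le_max_right m n))
    have hξk : ξ < b k := hm.trans_le (hbmono' m k (le_max_left m n))
    have hgk := hg i (b k) (hblt k)
    refine ⟨g i (b k), ⟨hgk.1, ?_⟩, hξk.trans hgk.2.1⟩
    calc g i (b k) ≤ step (b k) := hstep_ge (b k) i hik
      _ = b (k + 1) := (hbsucc k).symm
      _ < b (k + 2) := hbmono (k + 1)
      _ ≤ β := hble (k + 2)
  -- E is closed
  have hEcl : ∀ α < κ.ord, 0 < α → sSup (E ∩ Iio α) = α → α ∈ E := by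
    intro α hα h0 hsup
    refine ⟨hα, fun i hi => ?_⟩
    apply (hFc i).2.2 α hα h0
    apply sup_eq_of_unbddIn inter_subset_right h0
    intro ξ hξ
    obtain ⟨β, ⟨hβE, hβα⟩, hβgt⟩ := unbddIn_of_sup_eq h0 hsup (max ξ i) (max_lt hξ hi)
    exact ⟨β, ⟨hβE.2 i ((le_max_right ξ i).trans_lt hβgt), hβα⟩,
      (le_max_left ξ i).trans_lt hβgt⟩
  have hEclub : IsClubIn E κ.ord := ⟨hEsub, hEunb, hEcl⟩
  -- Z := E ∩ T is unbounded
  have hZunb : UnbIn (E ∩ T) κ.ord := by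
    intro α hα
    have hE' : IsClubIn (E ∩ {x | α < x}) κ.ord := by
      refine ⟨fun x hx => hEsub hx.1, ?_, ?_⟩
      · intro ξ hξ
        obtain ⟨β, hβE, hβgt, hβlt⟩ := hEunb (max α ξ) (max_lt hα hξ)
        exact ⟨β, ⟨hβE, (le_max_left α ξ).trans_lt hβgt⟩,
          (le_max_right α ξ).trans_lt hβgt, hβlt⟩
      · intro γ hγ h0 hsup
        obtain ⟨β, ⟨⟨hβE, hβα⟩, hβγ⟩, -⟩ := unbddIn_of_sup_eq h0 hsup 0 h0
        have hαγ : α < γ := hβα.trans hβγ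
        refine ⟨hEcl γ hγ h0 ?_, hαγ⟩
        apply sup_eq_of_unbddIn inter_subset_right h0
        intro ξ hξ
        obtain ⟨β', ⟨⟨hβ'E, -⟩, hβ'γ⟩, hβ'gt⟩ := unbddIn_of_sup_eq h0 hsup ξ hξ
        exact ⟨β', ⟨hβ'E, hβ'γ⟩, hβ'gt⟩
    obtain ⟨β, hβT, hβE, hβα⟩ := hT.2 _ hE'
    exact ⟨β, ⟨hβE, hβT⟩, hβα, hEsub hβE⟩
  obtain ⟨δ, hδS, i, hiδ, hsupZ⟩ :=
    hguess (E ∩ T) (fun x hx => hEsub hx.1) hZunb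
  have hδpos : 0 < δ := (zero_le (a := i)).trans_lt hiδ
  apply hFb i δ hδS hiδ
  apply sup_eq_of_unbddIn (fun x hx => hsub δ hδS i hiδ hx.1.1) hδpos
  intro ξ hξ
  obtain ⟨β, ⟨hβA, hβE, hβT⟩, hβgt⟩ :=
    unbddIn_of_sup_eq hδpos hsupZ (max ξ i) (max_lt hξ hiδ)
  exact ⟨β, ⟨⟨hβA, hβE.2 i ((le_max_right ξ i).trans_lt hβgt)⟩, hβT⟩,
    (le_max_left ξ i).trans_lt hβgt⟩
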